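/- (Finite analogue of Ramanujan's Entry 4.) Let N be a positive integer and q ∈ ℂ with |q| < 1. Let a ∈ ℂ with a·q^k ≠ 1 for 1 ≤ k ≤ N. Then ∑_{n=1}^{N} [N choose n]_q · (−1)^{n−1} a^n q^{n(n+1)/2} (q;q)_n / ((1 − q^n)(aq;q)_n) = ∑_{n=1}^{N} a q^n / (1 − a q^n). -/

import Mathlib

open Finset

/-- Finite q-Pochhammer symbol `(a;q)_n = ∏_{k=0}^{n-1} (1 - a q^k)`. -/
noncomputable def qPoch (q a : ℂ) (n : ℕ) : ℂ :=
  ∏ k ∈ Finset.range n, (1 - a * q ^ k)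

/-- Infinite q-Pochhammer symbol `(a;q)_∞ = ∏_{k=0}^{∞} (1 - a q^k)`. -/
noncomputable def qPochInf (q a : ℂ) : ℂ :=
  ∏' k : ℕ, (1 - a * q ^ k)

/-- Gaussian (q-binomial) coefficient `[N choose n]_q`. -/
noncomputable def qBinom (q : ℂ) (N n : ℕ) : ℂ :=
  qPoch q q N / (qPoch q q n * qPoch q q (N - n))

lemma qPoch_succ (q a : ℂ) (n : ℕ) :
    qPoch q a (n+1) = qPoch q a n * (1 - a * q ^ n) := Finset.prod_range_succ _ _

lemma qPoch_zero (q a : ℂ) : qPoch q a 0 = 1 := rfl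

lemma qPoch_ne_zero (q a : ℂ) (n : ℕ) (h : ∀ k < n, a * q ^ k ≠ 1) :
    qPoch q a n ≠ 0 := by
  apply Finset.prod_ne_zero_iff.mpr
  intro k hk
  rw [Finset.mem_range] at hk
  intro hc
  exact h k hk (by linear_combination -hc)

lemma one_sub_pow_ne (q : ℂ) (hq : ‖q‖ < 1) (n : ℕ) (hn : 1 ≤ n) :
    (1 : ℂ) - q ^ n ≠ 0 := by
  intro h
  have h1 : q ^ n = 1 := by linear_combination -h
  have h2 : ‖q ^ n‖ < 1 := by
    rw [norm_pow]
    exact pow_lt_one₀ (norm_nonneg q) hq (by omega)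
  rw [h1] at h2; simp at h2

lemma qq_ne_zero (q : ℂ) (hq : ‖q‖ < 1) (n : ℕ) : qPoch q q n ≠ 0 := by
  apply qPoch_ne_zero
  intro k _ hc
  exact one_sub_pow_ne q hq (k+1) (by omega) (by rw [pow_succ']; linear_combination -hc)

lemma qBinom_zero (q : ℂ) (hq : ‖q‖ < 1) (N : ℕ) : qBinom q N 0 = 1 := by
  simp [qBinom, qPoch_zero]
  exact qq_ne_zero q hq N

lemma qBinom_self (q : ℂ) (hq : ‖q‖ < 1) (N : ℕ) : qBinom q N N = 1 := by
  simp [qBinom, qPoch_zero]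
  exact qq_ne_zero q hq N

lemma qq_succ (q : ℂ) (n : ℕ) : qPoch q q (n+1) = qPoch q q n * (1 - q^(n+1)) := by
  rw [qPoch_succ]; ring

lemma pascalA (q : ℂ) (hq : ‖q‖ < 1) (m j : ℕ) :
    qBinom q (m+j+2) (m+1) = qBinom q (m+j+1) m + q^(m+1) * qBinom q (m+j+1) (m+1) := by
  have e1 : m+j+2-(m+1) = j+1 := by omega
  have e2 : m+j+1-m = j+1 := by omega
  have e3 : m+j+1-(m+1) = j := by omega
  simp only [qBinom, e1, e2, e3]
  rw [show m+j+2 = (m+j+1)+1 from rfl, qq_succ q (m+j+1), qq_succ q m, qq_succ q j]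
  have hP1 := qq_ne_zero q hq m
  have hP2 := qq_ne_zero q hq j
  have hP3 := qq_ne_zero q hq (m+j+1)
  have h1 := one_sub_pow_ne q hq (m+1) (by omega)
  have h2 := one_sub_pow_ne q hq (j+1) (by omega)
  field_simp
  ring

lemma pascalB (q : ℂ) (hq : ‖q‖ < 1) (m j : ℕ) :
    qBinom q (m+j+2) (m+1) = qBinom q (m+j+1) (m+1) + q^(j+1) * qBinom q (m+j+1) m := by
  have e1 : m+j+2-(m+1) = j+1 := by omega
  have e2 : m+j+1-m = j+1 := by omega
  have e3 : m+j+1-(m+1) = j := by omega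
  simp only [qBinom, e1, e2, e3]
  rw [show m+j+2 = (m+j+1)+1 from rfl, qq_succ q (m+j+1), qq_succ q m, qq_succ q j]
  have hP1 := qq_ne_zero q hq m
  have hP2 := qq_ne_zero q hq j
  have hP3 := qq_ne_zero q hq (m+j+1)
  have h1 := one_sub_pow_ne q hq (m+1) (by omega)
  have h2 := one_sub_pow_ne q hq (j+1) (by omega)
  field_simp
  ring

lemma qPoch_shift (q a : ℂ) (m : ℕ) :
    qPoch q (a*q) m * (1 - a*q^(m+1)) = (1 - a*q) * qPoch q (a*q*q) m := by
  have h : qPoch q (a*q) (m+1) = (1 - a*q) * qPoch q (a*q*q) m := by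
    rw [qPoch, Finset.prod_range_succ']
    simp only [pow_zero, mul_one]
    rw [mul_comm]
    congr 1
    exact Finset.prod_congr rfl (fun k _ => by ring_nf)
  rw [← h, qPoch_succ]; ring

lemma tri (m : ℕ) : (m+1)*(m+2)/2 = m*(m+1)/2 + (m+1) := by
  have h1 : m*(m+1)/2*2 = m*(m+1) := Nat.div_mul_cancel (Nat.even_mul_succ_self m).two_dvd
  have h2 : (m+1)*(m+2)/2*2 = (m+1)*(m+2) := Nat.div_mul_cancel (Nat.even_mul_succ_self (m+1)).two_dvd
  have h3 : (m+1)*(m+2) = m*(m+1) + 2*(m+1) := by ring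
  omega

noncomputable def Tt (q a : ℂ) (m : ℕ) : ℂ :=
  (-1)^m * a^m * q^(m*(m+1)/2) * qPoch q q m / (qPoch q (a*q) m * (1 - a*q^(m+1)))

lemma T_rec (q a : ℂ) (m : ℕ)
    (hq1 : (1:ℂ) - q^(m+1) ≠ 0)
    (haq : (1:ℂ) - a*q ≠ 0)
    (h1 : (1:ℂ) - a*q^(m+1) ≠ 0) (h2 : (1:ℂ) - a*q^(m+2) ≠ 0)
    (hp2 : qPoch q (a*q*q) m ≠ 0) :
    Tt q a (m+1) + q^m * Tt q a m = Tt q (a*q) m := by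
  have hfact := qPoch_shift q a m
  have hfact2 : qPoch q (a*q) (m+1) = (1-a*q) * qPoch q (a*q*q) m := by
    rw [qPoch_succ, ← hfact]; ring
  have hexp : q^((m+1)*((m+1)+1)/2) = q^(m*(m+1)/2) * q^(m+1) := by
    rw [show (m+1)*((m+1)+1)/2 = m*(m+1)/2 + (m+1) from tri m, pow_add]
  simp only [Tt, hfact, hfact2, hexp, qq_succ q m]
  have hb : qPoch q (a*q*q) m * (1 - (a*q)*q^(m+1)) ≠ 0 := by
    apply mul_ne_zero hp2
    intro h; apply h2; rw [← h]; ring_nf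
  have h2' : (1:ℂ) - a*q^(m+1+1) ≠ 0 := h2
  have h3 : (1:ℂ) - a*q*q^(m+1) ≠ 0 := fun h => hb (by rw [h, mul_zero])
  generalize qPoch q (a*q*q) m = P at hp2 hb ⊢
  rw [show a*q^(m+1+1) = a*q*q^(m+1) by ring]
  generalize hD : 1 - a*q*q^(m+1) = D at h3 hb ⊢
  field_simp
  subst hD
  ring

lemma one_sub_ne (a b : ℂ) (h : a ≠ b) : b - a ≠ 0 := sub_ne_zero_of_ne (Ne.symm h)

lemma S_sum (q : ℂ) (hq : ‖q‖ < 1) :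
    ∀ M : ℕ, ∀ a : ℂ, (∀ k, 1 ≤ k → k ≤ M+1 → a * q^k ≠ 1) →
      ∑ m ∈ Finset.range (M+1), qBinom q M m * Tt q a m = 1 / (1 - a * q^(M+1)) := by
  intro M
  induction M with
  | zero =>
    intro a ha
    simp [Tt, qBinom, qPoch]
  | succ M ih =>
    intro a ha
    have haq : (1:ℂ) - a*q ≠ 0 := by
      have := ha 1 le_rfl (by omega); rw [pow_one] at this
      exact fun h => this (by linear_combination -h)
    have hone : ∀ k, 1 ≤ k → k ≤ M+2 → (1:ℂ) - a*q^k ≠ 0 := by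
      intro k h1 h2 h
      exact ha k h1 h2 (by linear_combination -h)
    -- split the sum
    have split : ∑ m ∈ Finset.range (M+2), qBinom q (M+1) m * Tt q a m
        = ∑ m ∈ Finset.range (M+1), qBinom q M m * (Tt q a (m+1) + q^m * Tt q a m) := by
      rw [Finset.sum_range_succ']
      simp only [mul_add]
      rw [Finset.sum_add_distrib]
      rw [Finset.sum_range_succ (fun m => qBinom q (M+1) (m+1) * Tt q a (m+1)),
          Finset.sum_range_succ (fun m => qBinom q M m * Tt q a (m+1)),
          Finset.sum_range_succ' (fun m => qBinom q M m * (q^m * Tt q a m))]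
      have e1 : ∀ m ∈ Finset.range M, qBinom q (M+1) (m+1) * Tt q a (m+1)
          = qBinom q M m * Tt q a (m+1) + qBinom q M (m+1) * (q^(m+1) * Tt q a (m+1)) := by
        intro m hm
        rw [Finset.mem_range] at hm
        obtain ⟨j, rfl⟩ : ∃ j, M = m + 1 + j := ⟨M - (m+1), by omega⟩
        rw [show m+1+j+1 = m+j+2 from by omega, show m+1+j = m+j+1 from by omega,
          pascalA q hq m j]
        ring
      rw [Finset.sum_congr rfl e1, Finset.sum_add_distrib]
      rw [qBinom_self q hq (M+1), qBinom_self q hq M, qBinom_zero q hq (M+1), qBinom_zero q hq M]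
      ring
    rw [split]
    have ptw : ∀ m ∈ Finset.range (M+1),
        qBinom q M m * (Tt q a (m+1) + q^m * Tt q a m) = qBinom q M m * Tt q (a*q) m := by
      intro m hm
      rw [Finset.mem_range] at hm
      congr 1
      apply T_rec q a m (one_sub_pow_ne q hq (m+1) (by omega)) haq
        (hone (m+1) (by omega) (by omega)) (hone (m+2) (by omega) (by omega))
      · apply qPoch_ne_zero
        intro k hk h
        exact ha (k+2) (by omega) (by omega) (by rw [show k+2 = 1+1+k from by omega, pow_add, pow_add]; linear_combination h)
    rw [Finset.sum_congr rfl ptw]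
    rw [ih (a*q) (fun k h1 h2 h => ha (k+1) (by omega) (by omega) (by rw [pow_succ]; linear_combination h))]
    have : (a*q) * q^(M+1) = a * q^(M+2) := by rw [show M+2 = (M+1)+1 from rfl, pow_succ]; ring
    rw [this]

lemma sum_Icc_one (f : ℕ → ℂ) (n : ℕ) :
    ∑ k ∈ Finset.Icc 1 n, f k = ∑ m ∈ Finset.range n, f (m+1) := by
  induction n with
  | zero => simp
  | succ n ih => rw [Finset.sum_Icc_succ_top (by omega), ih, Finset.sum_range_succ]

theorem stmt_6 (N : ℕ) (hN : 1 ≤ N) (q a : ℂ) (hq : ‖q‖ < 1)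
    (ha : ∀ k ∈ Finset.Icc 1 N, a * q ^ k ≠ 1) :
    ∑ n ∈ Finset.Icc 1 N, qBinom q N n *
        ((-1) ^ (n - 1) * a ^ n * q ^ (n * (n + 1) / 2) * qPoch q q n) /
        ((1 - q ^ n) * qPoch q (a * q) n)
      = ∑ n ∈ Finset.Icc 1 N, a * q ^ n / (1 - a * q ^ n) := by
  induction N, hN using Nat.le_induction with
  | base =>
    have h1 : (1:ℂ) - q ≠ 0 := by
      have := one_sub_pow_ne q hq 1 le_rfl; rwa [pow_one] at this
    have h2 : (1:ℂ) - a*q ≠ 0 := by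
      have := ha 1 (by simp); rw [pow_one] at this
      exact fun h => this (by linear_combination -h)
    simp only [Finset.Icc_self, Finset.sum_singleton]
    rw [qBinom_self q hq 1]
    simp [qPoch]
    field_simp
  | succ N hN ih =>
    have ha' : ∀ k ∈ Finset.Icc 1 N, a * q ^ k ≠ 1 := by
      intro k hk; rw [Finset.mem_Icc] at hk
      exact ha k (Finset.mem_Icc.mpr ⟨hk.1, by omega⟩)
    have hone : ∀ k, 1 ≤ k → k ≤ N+1 → (1:ℂ) - a*q^k ≠ 0 := by
      intro k h1 h2 h
      exact ha k (Finset.mem_Icc.mpr ⟨h1, h2⟩) (by linear_combination -h)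
    rw [Finset.sum_Icc_succ_top (by omega : 1 ≤ N+1),
        Finset.sum_Icc_succ_top (by omega : 1 ≤ N+1), ← ih ha']
    -- pascal split on Icc 1 N
    have e1 : ∀ n ∈ Finset.Icc 1 N,
        qBinom q (N+1) n * ((-1) ^ (n - 1) * a ^ n * q ^ (n * (n + 1) / 2) * qPoch q q n) /
          ((1 - q ^ n) * qPoch q (a * q) n)
        = qBinom q N n * ((-1) ^ (n - 1) * a ^ n * q ^ (n * (n + 1) / 2) * qPoch q q n) /
          ((1 - q ^ n) * qPoch q (a * q) n)
        + q^(N+1-n) * qBinom q N (n-1) *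
            ((-1) ^ (n - 1) * a ^ n * q ^ (n * (n + 1) / 2) * qPoch q q n) /
          ((1 - q ^ n) * qPoch q (a * q) n) := by
      intro n hn
      rw [Finset.mem_Icc] at hn
      obtain ⟨m, rfl⟩ : ∃ m, n = m + 1 := ⟨n - 1, by omega⟩
      obtain ⟨j, rfl⟩ : ∃ j, N = m + 1 + j := ⟨N - (m+1), by omega⟩
      rw [show m+1+j+1 = m+j+2 from by omega, show m+1+j = m+j+1 from by omega,
        show m+j+2-(m+1) = j+1 from by omega, show m+1-1 = m from by omega,
        pascalB q hq m j]
      ring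
    rw [Finset.sum_congr rfl e1, Finset.sum_add_distrib]
    -- absorb the top term into the g-sum over Icc 1 (N+1)
    have e2 : qBinom q (N+1) (N+1) *
          ((-1) ^ (N+1-1) * a ^ (N+1) * q ^ ((N+1) * ((N+1) + 1) / 2) * qPoch q q (N+1)) /
          ((1 - q ^ (N+1)) * qPoch q (a * q) (N+1))
        = q^(N+1-(N+1)) * qBinom q N (N+1-1) *
          ((-1) ^ (N+1-1) * a ^ (N+1) * q ^ ((N+1) * ((N+1) + 1) / 2) * qPoch q q (N+1)) /
          ((1 - q ^ (N+1)) * qPoch q (a * q) (N+1)) := by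
      rw [qBinom_self q hq (N+1), Nat.sub_self, pow_zero, show N+1-1 = N from by omega,
        qBinom_self q hq N]
      ring
    rw [e2, add_assoc, ← Finset.sum_Icc_succ_top (by omega : 1 ≤ N+1)
      (f := fun n => q^(N+1-n) * qBinom q N (n-1) *
            ((-1) ^ (n - 1) * a ^ n * q ^ (n * (n + 1) / 2) * qPoch q q n) /
          ((1 - q ^ n) * qPoch q (a * q) n))]
    congr 1
    -- reindex to range and reduce to S_sum
    rw [sum_Icc_one]
    have e3 : ∀ m ∈ Finset.range (N+1),
        q^(N+1-(m+1)) * qBinom q N ((m+1)-1) *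
            ((-1) ^ ((m+1) - 1) * a ^ (m+1) * q ^ ((m+1) * ((m+1) + 1) / 2) * qPoch q q (m+1)) /
          ((1 - q ^ (m+1)) * qPoch q (a * q) (m+1))
        = (a * q^(N+1)) * (qBinom q N m * Tt q a m) := by
      intro m hm
      rw [Finset.mem_range] at hm
      have hm' : m ≤ N := by omega
      rw [show (m+1)-1 = m from by omega]
      have hexp : q^(N+1-(m+1)) * q^((m+1)*((m+1)+1)/2) = q^(N+1) * q^(m*(m+1)/2) := by
        rw [← pow_add, ← pow_add]
        congr 1
        rw [show (m+1)*((m+1)+1)/2 = (m+1)*(m+2)/2 from rfl, tri]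
        have : N+1-(m+1) = N-m := by omega
        rw [this]
        generalize m*(m+1)/2 = x
        omega
      rw [Tt, qq_succ q m, qPoch_succ q (a*q) m]
      have d1 : (1:ℂ) - q^(m+1) ≠ 0 := one_sub_pow_ne q hq (m+1) (by omega)
      have d2 : (1:ℂ) - a*q^(m+1) ≠ 0 := hone (m+1) (by omega) (by omega)
      have d2' : (1:ℂ) - (a*q)*q^m ≠ 0 := by
        intro h; apply d2; rw [← h]; ring_nf
      have d3 : qPoch q (a*q) m ≠ 0 := by
        apply qPoch_ne_zero
        intro k hk h
        exact ha (k+1) (Finset.mem_Icc.mpr ⟨by omega, by omega⟩) (by rw [pow_succ]; linear_combination h)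
      rw [show (a*q)*q^m = a*q^(m+1) by ring]
      have d2'' : (1:ℂ) - q^(m+1)*a ≠ 0 := by rwa [mul_comm]
      field_simp
      linear_combination (qBinom q N m * a^(m+1) * qPoch q q m) * hexp
    rw [Finset.sum_congr rfl e3, ← Finset.mul_sum,
      show N+1 = N+1 from by omega,
      S_sum q hq N a (fun k h1 h2 h => ha k (Finset.mem_Icc.mpr ⟨h1, h2⟩) h)]
    field_simp
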